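/- Monotonic improvement of the PMD update: let π be a policy in the relative interior of the policy set, η > 0, and let π' be a policy such that for every state s, π'(·|s) maximizes p ↦ η ⟨Q^π(s,·), p⟩ − D_φ(p, π(·|s)) over the simplex Δ(𝒜). Then, componentwise in ℝ^𝒮, V^π ≤ 𝒯^{π'} V^π ≤ V^{π'}. -/

import Mathlib

open Finset

noncomputable section

section Defs

variable {S A : Type*} [Fintype S] [Fintype A] [Nonempty A]

/-- Validity of a transition kernel: nonnegative rows summing to one. -/
def IsKernel (P : S → A → S → ℝ) : Prop :=
  ∀ s a, (∀ s', 0 ≤ P s a s') ∧ ∑ s', P s a s' = 1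

/-- A policy assigns to each state a probability distribution over actions. -/
def IsPolicy (π : S → A → ℝ) : Prop :=
  ∀ s, π s ∈ stdSimplex ℝ A

/-- The relative interior of the probability simplex over `A`. -/
def relintSimplex (A : Type*) [Fintype A] : Set (A → ℝ) :=
  {p | (∀ a, 0 < p a) ∧ ∑ a, p a = 1}

/-- A policy lying in the relative interior of the policy set. -/
def IsRelintPolicy (π : S → A → ℝ) : Prop :=
  ∀ s, π s ∈ relintSimplex A

/-- Expected Bellman operator `𝒯^π`. -/
def bellman (P : S → A → S → ℝ) (r : S → A → ℝ) (γ : ℝ)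
    (π : S → A → ℝ) (V : S → ℝ) : S → ℝ :=
  fun s => ∑ a, π s a * (r s a + γ * ∑ s', P s a s' * V s')

/-- Bellman optimality operator `𝒯`. -/
def bellmanOpt (P : S → A → S → ℝ) (r : S → A → ℝ) (γ : ℝ) (V : S → ℝ) : S → ℝ :=
  fun s => Finset.univ.sup' Finset.univ_nonempty
    (fun a => r s a + γ * ∑ s', P s a s' * V s')

/-- `h`-step lookahead action-value `Q_h^π`, given the value function `Vπ` of the policy:
`Q_h^π(s,a) = r(s,a) + γ Σ_{s'} P(s'|s,a) (𝒯^{h−1} V^π)(s')`. -/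
def Qlook (P : S → A → S → ℝ) (r : S → A → ℝ) (γ : ℝ) (h : ℕ) (Vπ : S → ℝ) :
    S → A → ℝ :=
  fun s a => r s a + γ * ∑ s', P s a s' * ((bellmanOpt P r γ)^[h - 1] Vπ) s'

/-- Set of `h`-step greedy policies with respect to `V`:
`𝒢_h(V) = {π : 𝒯^π 𝒯^{h−1} V = 𝒯^h V}`. -/
def greedySet (P : S → A → S → ℝ) (r : S → A → ℝ) (γ : ℝ) (h : ℕ) (V : S → ℝ) :
    Set (S → A → ℝ) :=
  {π | IsPolicy π ∧
    bellman P r γ π ((bellmanOpt P r γ)^[h - 1] V) = (bellmanOpt P r γ)^[h] V}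

/-- Bregman divergence of a mirror map `φ`:
`D_φ(p,q) = φ(p) − φ(q) − ⟨∇φ(q), p − q⟩`. -/
def bregman (φ : (A → ℝ) → ℝ) (p q : A → ℝ) : ℝ :=
  φ p - φ q - fderiv ℝ φ q (p - q)

/-- Mirror map of Legendre type (relative to the simplex as domain): strictly convex on the
simplex, differentiable on its relative interior, and essentially smooth (the gradient blows up
along any sequence in the relative interior converging to a boundary point). -/
def IsLegendre (φ : (A → ℝ) → ℝ) : Prop :=
  StrictConvexOn ℝ (stdSimplex ℝ A) φ ∧
  (∀ q ∈ relintSimplex A, DifferentiableAt ℝ φ q) ∧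
  (∀ (q : ℕ → (A → ℝ)) (p : A → ℝ), (∀ n, q n ∈ relintSimplex A) →
    p ∈ stdSimplex ℝ A → p ∉ relintSimplex A →
    Filter.Tendsto q Filter.atTop (nhds p) →
    Filter.Tendsto (fun n => ‖fderiv ℝ φ (q n)‖) Filter.atTop Filter.atTop)

/-- One PMD proximal step with stepsize `η` and action-value `Q`:
for every state `s`, `πk1 s` maximizes `p ↦ η ⟨Q(s,·), p⟩ − D_φ(p, πk(·|s))` over the simplex. -/
def PMDStep (φ : (A → ℝ) → ℝ) (η : ℝ) (Q : S → A → ℝ) (πk πk1 : S → A → ℝ) : Prop :=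
  ∀ s, πk1 s ∈ stdSimplex ℝ A ∧
    ∀ p ∈ stdSimplex ℝ A,
      η * (∑ a, Q s a * p a) - bregman φ p (πk s) ≤
        η * (∑ a, Q s a * πk1 s a) - bregman φ (πk1 s) (πk s)

/-- Set of policies maximizing `π ↦ M^π Q̂` (componentwise over states),
where `(M^π Q)(s) = Σ_a π(a|s) Q(s,a)`. -/
def greedySetQ (Qhat : S → A → ℝ) : Set (S → A → ℝ) :=
  {π | IsPolicy π ∧ ∀ s, ∀ p ∈ stdSimplex ℝ A,
    ∑ a, Qhat s a * p a ≤ ∑ a, Qhat s a * π s a}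

/-- `‖min_{π ∈ G} D_φ(π, πk)‖∞`, the sup norm over states of the componentwise infimum of the
Bregman divergence over a set `G` of policies. -/
def dtil [Nonempty S] (φ : (A → ℝ) → ℝ) (G : Set (S → A → ℝ)) (πk : S → A → ℝ) : ℝ :=
  ⨆ s : S, |⨅ π : G, bregman φ ((π : S → A → ℝ) s) (πk s)|

/-- Sup norm on `ℝ^S`. -/
def supNorm {S : Type*} [Fintype S] [Nonempty S] (V : S → ℝ) : ℝ := ⨆ s : S, |V s|

end Defs

lemma bregman_nonneg_aux {A : Type*} [Fintype A] {φ : (A → ℝ) → ℝ}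
    (hconv : ConvexOn ℝ (stdSimplex ℝ A) φ) {p q : A → ℝ}
    (hp : p ∈ stdSimplex ℝ A) (hq : q ∈ stdSimplex ℝ A)
    (hd : DifferentiableAt ℝ φ q) : 0 ≤ bregman φ p q := by
  set c : ℝ → (A → ℝ) := fun t => q + t • (p - q) with hc
  have hc0 : c 0 = q := by simp [hc]
  have hc1 : c 1 = p := by simp [hc]
  have hline : HasDerivAt c (p - q) 0 := by
    have h := ((hasDerivAt_id (0:ℝ)).smul_const (p - q)).const_add q
    rw [one_smul] at h; exact h
  have hderiv : HasDerivAt (φ ∘ c) (fderiv ℝ φ q (p - q)) 0 := by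
    have hd' : HasFDerivAt φ (fderiv ℝ φ q) (c 0) := hc0 ▸ hd.hasFDerivAt
    exact hd'.comp_hasDerivAt 0 hline
  have hsub : Set.Icc (0:ℝ) 1 ⊆ c ⁻¹' (stdSimplex ℝ A) := by
    intro t ht
    have : c t = (1 - t) • q + t • p := by
      simp only [hc]; module
    simp only [Set.mem_preimage, this]
    exact (convex_stdSimplex ℝ A) hq hp (by linarith [ht.2]) ht.1 (by ring)
  have hg : ConvexOn ℝ (Set.Icc (0:ℝ) 1) (φ ∘ c) := by
    have heq : c = fun t => AffineMap.lineMap q p t := by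
      funext t; simp [AffineMap.lineMap_apply, hc]; abel
    rw [heq]
    exact (hconv.comp_affineMap (AffineMap.lineMap q p)).subset
      (by intro t ht; have := hsub ht; rwa [heq] at this) (convex_Icc 0 1)
  have key := hg.le_slope_of_hasDerivAt (Set.left_mem_Icc.2 zero_le_one)
    (Set.right_mem_Icc.2 zero_le_one) zero_lt_one hderiv
  have hslope : slope (φ ∘ c) 0 1 = φ p - φ q := by
    simp [slope, hc0, hc1]
  rw [hslope] at key
  unfold bregman
  linarith

/-- monotonic improvement of the PMD update:
if `π'` maximizes the PMD proximal objective for `Q^π`, then componentwise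
`V^π ≤ 𝒯^{π'} V^π ≤ V^{π'}`. -/
theorem stmt8 {S A : Type*} [Fintype S] [Nonempty S] [Fintype A] [Nonempty A]
    (P : S → A → S → ℝ) (r : S → A → ℝ) (γ : ℝ)
    (hP : IsKernel P) (hr : ∀ s a, 0 ≤ r s a ∧ r s a ≤ 1)
    (hγ0 : 0 < γ) (hγ1 : γ < 1)
    (φ : (A → ℝ) → ℝ) (hφ : IsLegendre φ)
    (π π' : S → A → ℝ) (hπ : IsRelintPolicy π)
    (Vπ Vπ' : S → ℝ)
    (hVπ : bellman P r γ π Vπ = Vπ)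
    (hVπ' : bellman P r γ π' Vπ' = Vπ')
    (η : ℝ) (hη : 0 < η)
    (hupd : PMDStep φ η (Qlook P r γ 1 Vπ) π π') :
    ∀ s, Vπ s ≤ bellman P r γ π' Vπ s ∧ bellman P r γ π' Vπ s ≤ Vπ' s := by
  -- Basic facts about Q and bellman
  have hQ : ∀ s a, Qlook P r γ 1 Vπ s a = r s a + γ * ∑ s', P s a s' * Vπ s' := by
    intro s a; simp [Qlook]
  have hid : ∀ (ρ : S → A → ℝ) s,
      (∑ a, Qlook P r γ 1 Vπ s a * ρ s a) = bellman P r γ ρ Vπ s := by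
    intro ρ s
    unfold bellman
    refine Finset.sum_congr rfl fun a _ => ?_
    rw [hQ s a]; ring
  have hπ'0 : ∀ s a, 0 ≤ π' s a := fun s a => ((hupd s).1).1 a
  have hπ'1 : ∀ s, ∑ a, π' s a = 1 := fun s => ((hupd s).1).2
  -- Part 1 : Vπ ≤ 𝒯^{π'} Vπ
  have h1 : ∀ s, Vπ s ≤ bellman P r γ π' Vπ s := by
    intro s
    have hps : π s ∈ stdSimplex ℝ A := ⟨fun a => ((hπ s).1 a).le, (hπ s).2⟩
    have key := (hupd s).2 (π s) hps
    have hb0 : bregman φ (π s) (π s) = 0 := by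
      simp [bregman]
    have hbnn : 0 ≤ bregman φ (π' s) (π s) :=
      bregman_nonneg_aux hφ.1.convexOn (hupd s).1 hps (hφ.2.1 _ (hπ s))
    have hle : (∑ a, Qlook P r γ 1 Vπ s a * π s a) ≤
        ∑ a, Qlook P r γ 1 Vπ s a * π' s a := by
      have hη' : η * (∑ a, Qlook P r γ 1 Vπ s a * π s a) ≤
          η * (∑ a, Qlook P r γ 1 Vπ s a * π' s a) := by
        rw [hb0] at key; linarith
      exact le_of_mul_le_mul_left hη' hη
    rw [hid π s, hid π' s] at hle
    rw [hVπ] at hle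
    exact hle
  intro s
  refine ⟨h1 s, ?_⟩
  -- Part 2 : 𝒯^{π'} Vπ ≤ Vπ'
  set D : S → ℝ := fun s => Vπ s - Vπ' s with hD
  have hTdiff : ∀ s, bellman P r γ π' Vπ s - bellman P r γ π' Vπ' s
      = γ * ∑ a, π' s a * ∑ s', P s a s' * D s' := by
    intro s
    unfold bellman
    rw [← Finset.sum_sub_distrib, Finset.mul_sum]
    refine Finset.sum_congr rfl fun a _ => ?_
    have hinner : (∑ s', P s a s' * D s')
        = (∑ s', P s a s' * Vπ s') - ∑ s', P s a s' * Vπ' s' := by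
      rw [← Finset.sum_sub_distrib]
      exact Finset.sum_congr rfl fun s' _ => by simp [hD]; ring
    rw [hinner]; ring
  set M : ℝ := Finset.univ.sup' Finset.univ_nonempty D with hMdef
  have hM : ∀ s, D s ≤ M := fun s => Finset.le_sup' D (Finset.mem_univ s)
  have hCle : ∀ s, (∑ a, π' s a * ∑ s', P s a s' * D s') ≤ M := by
    intro s
    have hinner : ∀ a, (∑ s', P s a s' * D s') ≤ M := by
      intro a
      calc (∑ s', P s a s' * D s') ≤ ∑ s', P s a s' * M :=
            Finset.sum_le_sum fun s' _ =>
              mul_le_mul_of_nonneg_left (hM s') ((hP s a).1 s')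
        _ = M := by rw [← Finset.sum_mul, (hP s a).2, one_mul]
    calc (∑ a, π' s a * ∑ s', P s a s' * D s') ≤ ∑ a, π' s a * M :=
          Finset.sum_le_sum fun a _ =>
            mul_le_mul_of_nonneg_left (hinner a) (hπ'0 s a)
      _ = M := by rw [← Finset.sum_mul, hπ'1 s, one_mul]
  have hDs : ∀ s, D s ≤ γ * ∑ a, π' s a * ∑ s', P s a s' * D s' := by
    intro s
    have h2 := h1 s
    have h3 := congrFun hVπ' s
    have := hTdiff s
    simp only [hD] at *
    linarith
  have hM0 : M ≤ 0 := by
    obtain ⟨s0, -, hs0⟩ := Finset.exists_mem_eq_sup' Finset.univ_nonempty D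
    have h4 : M ≤ γ * M := by
      calc M = D s0 := hs0
        _ ≤ γ * ∑ a, π' s0 a * ∑ s', P s0 a s' * D s' := hDs s0
        _ ≤ γ * M := mul_le_mul_of_nonneg_left (hCle s0) hγ0.le
    nlinarith
  have h5 := hTdiff s
  have h6 := congrFun hVπ' s
  have h7 : γ * (∑ a, π' s a * ∑ s', P s a s' * D s') ≤ γ * M :=
    mul_le_mul_of_nonneg_left (hCle s) hγ0.le
  nlinarith
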